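/- Let k be an algebraically closed field of characteristic p > 0, let V be a nonzero finite-dimensional k-vector space and let F be a bijective Frobenius-semilinear endomorphism of V. Then there exists a nonzero vector v ∈ V with F(v) = v. -/

import Mathlib

open Polynomial

/-- Auxiliary polynomials for the fixed-vector equations. -/
noncomputable def stmtPolyB {k : Type*} [Field k] (p : ℕ) (a : ℕ → k) : ℕ → k[X]
  | 0 => C (a 0) * X ^ p
  | (i + 1) => (stmtPolyB p a i) ^ p + C (a (i + 1)) * X ^ p

theorem stmtPolyB_natDegree {k : Type*} [Field k] (p : ℕ) (hp : 2 ≤ p) (a : ℕ → k)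
    (ha : a 0 ≠ 0) : ∀ i, (stmtPolyB p a i).natDegree = p ^ (i + 1) := by
  intro i
  induction i with
  | zero => simpa [stmtPolyB] using natDegree_C_mul_X_pow p (a 0) ha
  | succ i ih =>
    have hB : (stmtPolyB p a i) ≠ 0 := by
      intro h
      rw [h] at ih
      simp only [natDegree_zero] at ih
      have := pow_pos (show 0 < p by omega) (i + 1)
      omega
    have hdeg : ((stmtPolyB p a i) ^ p).natDegree = p ^ (i + 2) := by
      rw [natDegree_pow, ih]; ring
    have h2 : (C (a (i + 1)) * X ^ p).natDegree < ((stmtPolyB p a i) ^ p).natDegree := by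
      rw [hdeg]
      calc (C (a (i + 1)) * X ^ p).natDegree ≤ p := by
            apply le_trans (natDegree_mul_le)
            simp
          _ < p ^ (i + 2) := by
            calc p = p ^ 1 := (pow_one p).symm
            _ < p ^ (i + 2) := Nat.pow_lt_pow_right (by omega) (by omega)
    rw [stmtPolyB, natDegree_add_eq_left_of_natDegree_lt h2, hdeg]

theorem stmtPolyB_coeff_zero {k : Type*} [Field k] (p : ℕ) (hp : 0 < p) (a : ℕ → k) :
    ∀ i, (stmtPolyB p a i).coeff 0 = 0 := by
  intro i
  induction i with
  | zero => rw [stmtPolyB, coeff_C_mul, coeff_X_pow, if_neg (by omega)]; ring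
  | succ i ih =>
    have : (stmtPolyB p a i).eval 0 = 0 := by
      rwa [← coeff_zero_eq_eval_zero]
    rw [stmtPolyB, coeff_zero_eq_eval_zero]
    simp [this, zero_pow hp.ne', hp.ne']

theorem stmtPolyB_coeff_one {k : Type*} [Field k] [CharP k p] [hpf : Fact p.Prime]
    (a : ℕ → k) : ∀ i, (stmtPolyB p a i).coeff 1 = 0 := by
  have hp1 : p ≠ 1 := hpf.out.ne_one
  intro i
  induction i with
  | zero => simp [stmtPolyB, coeff_X_pow, Ne.symm hp1]
  | succ i ih =>
    rw [stmtPolyB, coeff_add, coeff_C_mul, coeff_X_pow, if_neg (Ne.symm hp1), mul_zero, add_zero]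
    have hexp := Polynomial.map_frobenius_expand p (stmtPolyB p a i)
    rw [← hexp, coeff_map, Polynomial.coeff_expand hpf.out.pos]
    rw [if_neg (by simpa using hp1)]
    simp

/-- Let `k` be an algebraically closed field of characteristic `p > 0`,
`V` a nonzero finite-dimensional `k`-vector space and `F` a bijective Frobenius-semilinear
endomorphism of `V`. Then `F` has a nonzero fixed vector. -/
theorem stmt_2 (p : ℕ) [Fact p.Prime] (k : Type*) [Field k] [CharP k p] [IsAlgClosed k]
    (V : Type*) [AddCommGroup V] [Module k V] [FiniteDimensional k V] [Nontrivial V]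
    (F : V → V) (hFbij : Function.Bijective F)
    (hFadd : ∀ x y : V, F (x + y) = F x + F y)
    (hFsmul : ∀ (c : k) (v : V), F (c • v) = c ^ p • F v) :
    ∃ v : V, v ≠ 0 ∧ F v = v := by
  classical
  have hp := (Fact.out : p.Prime)
  obtain ⟨v, hv⟩ := exists_ne (0 : V)
  set g : ℕ → V := fun i => F^[i] v with hg
  have hgsucc : ∀ i, g (i + 1) = F (g i) := fun i => Function.iterate_succ_apply' F i v
  -- the additive-monoid-hom version of F
  let Fh : V →+ V := AddMonoidHom.mk' F hFadd
  have hFh : ∀ x, Fh x = F x := fun _ => rfl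
  -- existence of a dependent family
  have hdep : ∃ n, ¬ LinearIndependent k (fun i : Fin (n + 1) => g (i : ℕ)) := by
    refine ⟨Module.finrank k V, fun h => ?_⟩
    have := h.fintype_card_le_finrank
    simp at this
  set n := Nat.find hdep with hn
  have hnd : ¬ LinearIndependent k (fun i : Fin (n + 1) => g (i : ℕ)) := Nat.find_spec hdep
  have hmin : ∀ m, m < n → LinearIndependent k (fun i : Fin (m + 1) => g (i : ℕ)) :=
    fun m hm => not_not.mp (Nat.find_min hdep hm)
  -- n ≥ 1
  have hn0 : n ≠ 0 := by
    intro h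
    apply hnd
    rw [h]
    have : (fun i : Fin 1 => g (i : ℕ)) = fun _ : Fin 1 => v := by
      funext i
      have : (i : ℕ) = 0 := by omega
      simp [this, hg]
    rw [this]
    haveI : Unique (Fin (0 + 1)) := inferInstanceAs (Unique (Fin 1))
    exact linearIndependent_unique_iff.mpr hv
  clear_value n
  clear hn
  obtain ⟨m, rfl⟩ : ∃ m, n = m + 1 := ⟨n - 1, by omega⟩
  have hind : LinearIndependent k (fun i : Fin (m + 1) => g (i : ℕ)) := hmin m (by omega)
  -- decompose the (m+2)-family as a snoc
  have hsnoc : ∀ N, (fun i : Fin (N + 1) => g (i : ℕ)) =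
      Fin.snoc (fun i : Fin N => g (i : ℕ)) (g N) := by
    intro N
    funext i
    refine Fin.lastCases ?_ (fun j => ?_) i
    · simp
    · simp [Fin.snoc_castSucc]
  have hnotmem : g (m + 1) ∈ Submodule.span k (Set.range fun i : Fin (m + 1) => g (i : ℕ)) := by
    by_contra h
    apply hnd
    rw [hsnoc (m + 1)]
    exact linearIndependent_fin_snoc.mpr ⟨hind, h⟩
  obtain ⟨c, hc⟩ := (Submodule.mem_span_range_iff_exists_fun k).mp hnotmem
  -- transfer to ℕ-indexed coefficients
  set a : ℕ → k := fun i => if h : i < m + 1 then c ⟨i, h⟩ else 0 with ha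
  have hsum : ∑ i ∈ Finset.range (m + 1), a i • g i = g (m + 1) := by
    rw [← hc, ← Fin.sum_univ_eq_sum_range (fun i => a i • g i) (m + 1)]
    apply Finset.sum_congr rfl
    intro i _
    simp [ha, i.isLt, Fin.is_le i]
  -- a 0 ≠ 0
  have hFinj := hFbij.injective
  have ha0 : a 0 ≠ 0 := by
    intro h0
    -- then g (m+1) lies in F of the span of g 0, ..., g (m-1)
    have hnm : g m ∉ Submodule.span k (Set.range fun i : Fin m => g (i : ℕ)) := by
      intro hmem
      have := linearIndependent_fin_snoc.mp (by rw [← hsnoc m]; exact hind)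
      exact this.2 hmem
    have key : ∑ i ∈ Finset.range (m + 1), a i • g i
        = ∑ i ∈ Finset.range m, a (i + 1) • g (i + 1) := by
      rw [Finset.sum_range_succ']
      simp [h0]
    -- take p-th roots
    have hroot : ∀ i : ℕ, ∃ r : k, r ^ p = a (i + 1) := by
      intro i
      obtain ⟨r, hr⟩ := surjective_frobenius k p (a (i + 1))
      exact ⟨r, hr⟩
    choose r hr using hroot
    have : F (g m) = F (∑ i ∈ Finset.range m, r i • g i) := by
      rw [← hgsucc m, ← hsum, key]
      rw [show (∑ i ∈ Finset.range m, r i • g i) = ∑ i ∈ Finset.range m, r i • g i from rfl]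
      rw [← hFh, map_sum]
      apply Finset.sum_congr rfl
      intro i _
      rw [hFh, hFsmul, hr, hgsucc]
    have hgm : g m = ∑ i ∈ Finset.range m, r i • g i := hFinj this
    apply hnm
    rw [hgm]
    apply Submodule.sum_mem
    intro i hi
    exact Submodule.smul_mem _ _ (Submodule.subset_span ⟨⟨i, Finset.mem_range.mp hi⟩, rfl⟩)
  -- the polynomial P = B m - X has a nonzero root t
  have hp2 : 2 ≤ p := hp.two_le
  set B := stmtPolyB p a with hB
  have hdegB : (B m).natDegree = p ^ (m + 1) := stmtPolyB_natDegree p hp2 a ha0 m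
  set P : k[X] := B m - X with hP
  have hdegP : P.natDegree = p ^ (m + 1) := by
    have h1 : (X : k[X]).natDegree < (B m).natDegree := by
      rw [hdegB, natDegree_X]
      calc 1 < p := by omega
      _ ≤ p ^ (m + 1) := Nat.le_self_pow (by omega) p
    rw [hP, sub_eq_add_neg, natDegree_add_eq_left_of_natDegree_lt (by rwa [natDegree_neg]), hdegB]
  have hPne : P ≠ 0 := by
    intro h
    rw [h, natDegree_zero] at hdegP
    have := pow_pos (show 0 < p by omega) (m + 1)
    omega
  have hP0 : P.coeff 0 = 0 := by
    rw [hP, coeff_sub, stmtPolyB_coeff_zero p (by omega) a m, coeff_X_zero, sub_zero]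
  have hP1 : P.coeff 1 = -1 := by
    rw [hP, coeff_sub, stmtPolyB_coeff_one a m, coeff_X_one, zero_sub]
  obtain ⟨Q, hQ⟩ := Polynomial.X_dvd_iff.mpr hP0
  have hQne : Q ≠ 0 := fun h => hPne (by rw [hQ, h, mul_zero])
  have hdegQ : Q.natDegree = p ^ (m + 1) - 1 := by
    have := hdegP
    rw [hQ, natDegree_mul X_ne_zero hQne, natDegree_X] at this
    omega
  have hQdeg_pos : 0 < Q.natDegree := by
    rw [hdegQ]
    have : p ≤ p ^ (m + 1) := Nat.le_self_pow (by omega) p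
    omega
  obtain ⟨t, ht⟩ := IsAlgClosed.exists_root Q
    (degree_ne_of_natDegree_ne (by omega) : Q.degree ≠ (0 : ℕ))
  rw [IsRoot] at ht
  have hQ0 : Q.coeff 0 = -1 := by
    have : P.coeff 1 = Q.coeff 0 := by rw [hQ, coeff_X_mul]
    rw [← this, hP1]
  have htne : t ≠ 0 := by
    intro h
    rw [h, ← coeff_zero_eq_eval_zero, hQ0] at ht
    exact one_ne_zero (neg_eq_zero.mp ht)
  have hPt : P.eval t = 0 := by rw [hQ]; simp [ht]
  have hBt : (B m).eval t = t := by
    have h : (B m).eval t - t = 0 := by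
      rw [← hPt, hP]; simp
    exact sub_eq_zero.mp h
  -- define the coefficients b
  set b : ℕ → k := fun i => (B i).eval t with hb
  have hb0 : b 0 = a 0 * t ^ p := by simp [hb, hB, stmtPolyB]
  have hbsucc : ∀ i, b (i + 1) = b i ^ p + a (i + 1) * t ^ p := by
    intro i
    simp [hb, hB, stmtPolyB]
  have hbm : b m = t := hBt
  -- the fixed vector
  set w : V := ∑ i ∈ Finset.range (m + 1), b i • g i with hw
  have hwne : w ≠ 0 := by
    intro h
    have hfin : ∑ i : Fin (m + 1), b (i : ℕ) • g (i : ℕ) = 0 := by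
      rw [Fin.sum_univ_eq_sum_range (fun i => b i • g i) (m + 1), ← hw, h]
    have := Fintype.linearIndependent_iff.mp hind (fun i => b (i : ℕ)) hfin ⟨m, by omega⟩
    simp at this
    rw [hbm] at this
    exact htne this
  refine ⟨w, hwne, ?_⟩
  have hFw : F w = ∑ i ∈ Finset.range m, (b i ^ p) • g (i + 1)
      + ∑ i ∈ Finset.range (m + 1), (t ^ p * a i) • g i := by
    rw [hw, ← hFh, map_sum]
    have : ∀ i ∈ Finset.range (m + 1), Fh (b i • g i) = (b i ^ p) • g (i + 1) := by
      intro i _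
      rw [hFh, hFsmul, hgsucc]
    rw [Finset.sum_congr rfl this, Finset.sum_range_succ]
    congr 1
    rw [hbm, ← hsum, Finset.smul_sum]
    apply Finset.sum_congr rfl
    intro i _
    rw [smul_smul]
  rw [hFw]
  rw [Finset.sum_range_succ' (fun i => (t ^ p * a i) • g i) m]
  rw [hw, Finset.sum_range_succ' (fun i => b i • g i) m]
  rw [← add_assoc, ← Finset.sum_add_distrib]
  congr 1
  · apply Finset.sum_congr rfl
    intro i _
    rw [← add_smul, hbsucc i]
    ring_nf
  · rw [hb0]
    ring_nf
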